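/- arXiv:1503.05314 — 12 statements merged into one kernel-verified Lean document; each statement's English description precedes it below -/
import Mathlib

section
/- Let m : ℝ → ℝ be differentiable on (0, ∞) and satisfy m(η) > 0 and deriv m(η) ≤ −m(η)² for every η > 0. Then the function f(η) := 1/m(η) − η is non-decreasing on (0, ∞). If in addition m(η) < 1/η for every η > 0 (so that f(η) > 0), then ψ(η) := (1/m(η) − η)⁻¹ is non-increasing on (0, ∞). (Second half of Proposition 1.) -/
/-- Second half of Proposition 1: if `m` (modelling the MMSE function) is differentiable
on `(0,∞)`, positive there, and satisfies `deriv m η ≤ −(m η)²` (Property 2 of the MMSE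
function together with Jensen's inequality), then `f(η) = 1/m(η) − η` is non-decreasing
on `(0,∞)`; if moreover `m(η) < 1/η` for all `η > 0`, then `ψ(η) = (1/m(η) − η)⁻¹`
is non-increasing on `(0,∞)`. -/
theorem tsr_psi_nonincreasing (m : ℝ → ℝ)
    (hdiff : ∀ η > (0 : ℝ), DifferentiableAt ℝ m η)
    (hpos : ∀ η > (0 : ℝ), 0 < m η)
    (hder : ∀ η > (0 : ℝ), deriv m η ≤ -(m η) ^ 2) :
    (∀ η₁ η₂ : ℝ, 0 < η₁ → η₁ ≤ η₂ → 1 / m η₁ - η₁ ≤ 1 / m η₂ - η₂) ∧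
    ((∀ η > (0 : ℝ), m η < 1 / η) →
      ∀ η₁ η₂ : ℝ, 0 < η₁ → η₁ ≤ η₂ → (1 / m η₂ - η₂)⁻¹ ≤ (1 / m η₁ - η₁)⁻¹) := by
  set f : ℝ → ℝ := fun η => 1 / m η - η with hf
  have hfder : ∀ x > (0 : ℝ), HasDerivAt f (-deriv m x / (m x) ^ 2 - 1) x := by
    intro x hx
    have h1 : HasDerivAt (fun y => (m y)⁻¹) (-deriv m x / (m x) ^ 2) x :=
      ((hdiff x hx).hasDerivAt).inv (ne_of_gt (hpos x hx))
    have h2 : HasDerivAt f (-deriv m x / (m x) ^ 2 - 1) x := by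
      simpa [hf, one_div, Pi.sub_def] using h1.sub (hasDerivAt_id' x)
    exact h2
  have hmono : MonotoneOn f (Set.Ioi (0 : ℝ)) := by
    apply monotoneOn_of_deriv_nonneg (convex_Ioi 0)
    · exact fun x hx => ((hfder x hx).differentiableAt).continuousAt.continuousWithinAt
    · intro x hx
      rw [interior_Ioi] at hx
      exact ((hfder x hx).differentiableAt).differentiableWithinAt
    · intro x hx
      rw [interior_Ioi] at hx
      rw [(hfder x hx).deriv]
      have hm2 : (0 : ℝ) < (m x) ^ 2 := pow_pos (hpos x hx) 2
      have : (m x) ^ 2 ≤ -deriv m x := by linarith [hder x hx]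
      have h1 : (1 : ℝ) ≤ -deriv m x / (m x) ^ 2 := (le_div_iff₀ hm2).mpr (by linarith)
      linarith
  have hmain : ∀ η₁ η₂ : ℝ, 0 < η₁ → η₁ ≤ η₂ → 1 / m η₁ - η₁ ≤ 1 / m η₂ - η₂ := by
    intro η₁ η₂ h1 h12
    exact hmono (Set.mem_Ioi.mpr h1) (Set.mem_Ioi.mpr (lt_of_lt_of_le h1 h12)) h12
  refine ⟨hmain, fun hlt η₁ η₂ h1 h12 => ?_⟩
  have hfpos : 0 < 1 / m η₁ - η₁ := by
    have hm := hpos η₁ h1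
    have := hlt η₁ h1
    have : η₁ < 1 / m η₁ := by
      rw [lt_div_iff₀ hm]
      have h2 : m η₁ * η₁ < 1 / η₁ * η₁ := by
        exact mul_lt_mul_of_pos_right (hlt η₁ h1) h1
      rw [one_div, inv_mul_cancel₀ (ne_of_gt h1)] at h2
      linarith
    linarith
  exact inv_anti₀ hfpos (hmain η₁ η₂ h1 h12)
end

section
/- The TSR state-evolution sequences are monotone: for every t ≥ 0, v^{t+1} ≤ v^t, and for every t ≥ 1, η^t ≤ η^{t+1}. (Equation (24).) -/
/-- Equation (24): the TSR state-evolution sequences are monotone: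
`v^{t+1} ≤ v^t` for all `t ≥ 0` and `η^t ≤ η^{t+1}` for all `t ≥ 1`. -/
theorem tsr_se_monotone (M N σ2 : ℝ) (hM : 0 < M) (hMN : M < N) (hσ2 : 0 < σ2)
    (m : ℝ → ℝ)
    (hm : ∀ η > (0 : ℝ), 0 < m η ∧ m η ≤ 1 / (1 + η))
    (hf : ∀ η₁ η₂ : ℝ, 0 < η₁ → η₁ ≤ η₂ → 1 / m η₁ - η₁ ≤ 1 / m η₂ - η₂)
    (v η : ℕ → ℝ) (hv0 : v 0 = 1)
    (hη : ∀ t : ℕ, η (t + 1) = (((N - M) / M) * v t + (N / M) * σ2)⁻¹)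
    (hv : ∀ t : ℕ, v (t + 1) = (1 / m (η (t + 1)) - η (t + 1))⁻¹) :
    (∀ t : ℕ, v (t + 1) ≤ v t) ∧ (∀ t : ℕ, 1 ≤ t → η t ≤ η (t + 1)) := by
  have hc : 0 < (N - M) / M := div_pos (by linarith) hM
  have hd : 0 < (N / M) * σ2 := mul_pos (div_pos (by linarith) hM) hσ2
  -- key: for η > 0, 1 ≤ 1/m(η) - η
  have key : ∀ e : ℝ, 0 < e → 1 ≤ 1 / m e - e := by
    intro e he
    obtain ⟨h1, h2⟩ := hm e he
    have hpos : (0 : ℝ) < 1 + e := by linarith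
    have h3 : (1 + e) * m e ≤ (1 + e) * (1 / (1 + e)) :=
      mul_le_mul_of_nonneg_left h2 (le_of_lt hpos)
    have h4 : (1 + e) * (1 / (1 + e)) = 1 := by field_simp
    have h5 : 1 + e ≤ 1 / m e := by
      rw [le_div_iff₀ h1]; linarith
    linarith
  -- positivity of v
  have vpos : ∀ t : ℕ, 0 < v t := by
    intro t
    induction t with
    | zero => rw [hv0]; norm_num
    | succ s ih =>
      have hηpos : 0 < η (s + 1) := by
        rw [hη s]; exact inv_pos.mpr (by positivity)
      rw [hv s]
      exact inv_pos.mpr (by linarith [key _ hηpos])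
  have ηpos : ∀ t : ℕ, 0 < η (t + 1) := by
    intro t; rw [hη t]; exact inv_pos.mpr (by nlinarith [vpos t])
  -- v (t+1) ≤ 1
  have vle1 : ∀ t : ℕ, v (t + 1) ≤ 1 := by
    intro t
    rw [hv t]
    exact inv_le_one_of_one_le₀ (key _ (ηpos t))
  -- main induction
  have vmono : ∀ t : ℕ, v (t + 1) ≤ v t := by
    intro t
    induction t with
    | zero => rw [hv0]; exact vle1 0
    | succ s ih =>
      -- η (s+1) ≤ η (s+2)
      have hηm : η (s + 1) ≤ η (s + 2) := by
        rw [hη s, hη (s + 1)]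
        apply inv_anti₀ (by nlinarith [vpos (s + 1)])
        nlinarith
      have hfs := hf (η (s + 1)) (η (s + 2)) (ηpos s) hηm
      rw [hv (s + 1), hv s]
      exact inv_anti₀ (by linarith [key _ (ηpos s)]) hfs
  refine ⟨vmono, ?_⟩
  intro t ht
  obtain ⟨s, rfl⟩ := Nat.exists_eq_add_of_le ht
  have h1s : (1 : ℕ) + s = s + 1 := by ring
  rw [h1s, hη s, hη (s + 1 : ℕ)]
  apply inv_anti₀ (by nlinarith [vpos (s + 1)])
  nlinarith [vmono s]
end

section
/- The TSR state-evolution sequences are bounded: for every t ≥ 0 one has 0 ≤ v^t ≤ 1, and for every t ≥ 0 one has 0 < η^{t+1} ≤ M/(N·σ²). (Equation (28).) -/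
/-- Equation (28): the TSR state-evolution sequences are bounded:
`0 ≤ v^t ≤ 1` for all `t ≥ 0` and `0 < η^{t+1} ≤ M/(N·σ²)` for all `t ≥ 0`. -/
theorem tsr_se_bounded (M N σ2 : ℝ) (hM : 0 < M) (hMN : M < N) (hσ2 : 0 < σ2)
    (m : ℝ → ℝ)
    (hm : ∀ η > (0 : ℝ), 0 < m η ∧ m η ≤ 1 / (1 + η))
    (hf : ∀ η₁ η₂ : ℝ, 0 < η₁ → η₁ ≤ η₂ → 1 / m η₁ - η₁ ≤ 1 / m η₂ - η₂)
    (v η : ℕ → ℝ) (hv0 : v 0 = 1)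
    (hη : ∀ t : ℕ, η (t + 1) = (((N - M) / M) * v t + (N / M) * σ2)⁻¹)
    (hv : ∀ t : ℕ, v (t + 1) = (1 / m (η (t + 1)) - η (t + 1))⁻¹) :
    (∀ t : ℕ, 0 ≤ v t ∧ v t ≤ 1) ∧
    (∀ t : ℕ, 0 < η (t + 1) ∧ η (t + 1) ≤ M / (N * σ2)) := by
  have hN : 0 < N := hM.trans hMN
  -- η bound from v bound
  have hetaStep : ∀ t : ℕ, 0 ≤ v t → v t ≤ 1 →
      0 < η (t + 1) ∧ η (t + 1) ≤ M / (N * σ2) := by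
    intro t hv0' hv1'
    have hcoef : 0 ≤ (N - M) / M := div_nonneg (by linarith) hM.le
    have hD2 : 0 < (N / M) * σ2 := mul_pos (div_pos hN hM) hσ2
    have hDge : (N / M) * σ2 ≤ ((N - M) / M) * v t + (N / M) * σ2 := by
      nlinarith [mul_nonneg hcoef hv0']
    have hDpos : 0 < ((N - M) / M) * v t + (N / M) * σ2 := lt_of_lt_of_le hD2 hDge
    constructor
    · rw [hη t]; exact inv_pos.mpr hDpos
    · rw [hη t]
      have : (((N - M) / M) * v t + (N / M) * σ2)⁻¹ ≤ ((N / M) * σ2)⁻¹ :=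
        inv_anti₀ hD2 hDge
      calc (((N - M) / M) * v t + (N / M) * σ2)⁻¹ ≤ ((N / M) * σ2)⁻¹ := this
        _ = M / (N * σ2) := by field_simp
  -- v step
  have hvStep : ∀ t : ℕ, 0 < η (t + 1) → 0 ≤ v (t + 1) ∧ v (t + 1) ≤ 1 := by
    intro t hpos
    obtain ⟨hm0, hm1⟩ := hm _ hpos
    have h1x : (0:ℝ) < 1 + η (t + 1) := by linarith
    have hge : 1 + η (t + 1) ≤ 1 / m (η (t + 1)) := by
      rw [le_div_iff₀ hm0]
      calc (1 + η (t + 1)) * m (η (t + 1)) ≤ (1 + η (t + 1)) * (1 / (1 + η (t + 1))) :=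
            mul_le_mul_of_nonneg_left hm1 h1x.le
        _ = 1 := by field_simp
    have hden : (1:ℝ) ≤ 1 / m (η (t + 1)) - η (t + 1) := by linarith
    have hdenpos : (0:ℝ) < 1 / m (η (t + 1)) - η (t + 1) := by linarith
    constructor
    · rw [hv t]; exact (inv_pos.mpr hdenpos).le
    · rw [hv t]; exact inv_le_one_of_one_le₀ hden
  have hvBound : ∀ t : ℕ, 0 ≤ v t ∧ v t ≤ 1 := by
    intro t
    induction t with
    | zero => rw [hv0]; exact ⟨zero_le_one, le_refl 1⟩
    | succ n ih =>
      exact hvStep n (hetaStep n ih.1 ih.2).1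
  exact ⟨hvBound, fun t => hetaStep t (hvBound t).1 (hvBound t).2⟩
end

section
/- The TSR state-evolution sequences converge: there exist real numbers v^∞ ∈ [0, 1] and η^∞ ∈ (0, M/(N·σ²)] such that v^t → v^∞ and η^{t+1} → η^∞ as t → ∞. -/
open Filter

/-- The TSR state-evolution sequences converge: there exist `v^∞ ∈ [0, 1]` and
`η^∞ ∈ (0, M/(N·σ²)]` such that `v^t → v^∞` and `η^{t+1} → η^∞` as `t → ∞`. -/
theorem tsr_se_converges (M N σ2 : ℝ) (hM : 0 < M) (hMN : M < N) (hσ2 : 0 < σ2)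
    (m : ℝ → ℝ)
    (hm : ∀ η > (0 : ℝ), 0 < m η ∧ m η ≤ 1 / (1 + η))
    (hf : ∀ η₁ η₂ : ℝ, 0 < η₁ → η₁ ≤ η₂ → 1 / m η₁ - η₁ ≤ 1 / m η₂ - η₂)
    (v η : ℕ → ℝ) (hv0 : v 0 = 1)
    (hη : ∀ t : ℕ, η (t + 1) = (((N - M) / M) * v t + (N / M) * σ2)⁻¹)
    (hv : ∀ t : ℕ, v (t + 1) = (1 / m (η (t + 1)) - η (t + 1))⁻¹) :
    ∃ vinf ηinf : ℝ, vinf ∈ Set.Icc (0 : ℝ) 1 ∧ ηinf ∈ Set.Ioc (0 : ℝ) (M / (N * σ2)) ∧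
      Tendsto v atTop (nhds vinf) ∧
      Tendsto (fun t : ℕ => η (t + 1)) atTop (nhds ηinf) := by
  set a := (N - M) / M with ha_def
  set b := (N / M) * σ2 with hb_def
  have ha : 0 < a := div_pos (by linarith) hM
  have hb : 0 < b := mul_pos (div_pos (by linarith) hM) hσ2
  have key : ∀ x > (0 : ℝ), 1 ≤ 1 / m x - x := by
    intro x hx
    obtain ⟨h1, h2⟩ := hm x hx
    have hx1 : (0:ℝ) < 1 + x := by linarith
    have : 1 + x ≤ 1 / m x := by
      rw [le_div_iff₀ h1]
      calc (1 + x) * m x ≤ (1 + x) * (1 / (1 + x)) :=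
            mul_le_mul_of_nonneg_left h2 (by linarith)
        _ = 1 := by field_simp
    linarith
  have hbound : ∀ t, 0 < v t ∧ v t ≤ 1 := by
    intro t
    induction t with
    | zero => simp [hv0]
    | succ t ih =>
      have hd : 0 < a * v t + b := by nlinarith [ih.1]
      have hηpos : 0 < η (t + 1) := by rw [hη t]; exact inv_pos.mpr hd
      have hk := key (η (t + 1)) hηpos
      rw [hv t]
      constructor
      · exact inv_pos.mpr (by linarith)
      · exact inv_le_one_of_one_le₀ (by linarith)
  have hmono : ∀ t, v (t + 1) ≤ v t := by
    intro t
    induction t with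
    | zero => rw [hv0]; exact (hbound 1).2
    | succ t ih =>
      have hvt := (hbound t).1
      have hvt1 := (hbound (t + 1)).1
      have hd1 : 0 < a * v t + b := by nlinarith
      have hd2 : 0 < a * v (t + 1) + b := by nlinarith
      have hle : a * v (t + 1) + b ≤ a * v t + b := by nlinarith
      have hηle : η (t + 1) ≤ η (t + 2) := by
        rw [hη t, hη (t + 1)]
        exact inv_anti₀ hd2 hle
      have hη1pos : 0 < η (t + 1) := by rw [hη t]; exact inv_pos.mpr hd1
      have hf' := hf (η (t + 1)) (η (t + 2)) hη1pos hηle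
      have k1 := key (η (t + 1)) hη1pos
      rw [hv (t + 1), hv t]
      exact inv_anti₀ (by linarith) hf'
  have hbdd : BddBelow (Set.range v) := ⟨0, by rintro x ⟨t, rfl⟩; exact (hbound t).1.le⟩
  have hanti : Antitone v := antitone_nat_of_succ_le hmono
  have hconv : Tendsto v atTop (nhds (⨅ t, v t)) := tendsto_atTop_ciInf hanti hbdd
  set vinf := ⨅ t, v t with hvinf_def
  have hvinf0 : 0 ≤ vinf := le_ciInf fun t => (hbound t).1.le
  have hvinf1 : vinf ≤ 1 := (ciInf_le hbdd 0).trans_eq hv0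
  have hden : 0 < a * vinf + b := by nlinarith
  refine ⟨vinf, (a * vinf + b)⁻¹, ⟨hvinf0, hvinf1⟩, ⟨inv_pos.mpr hden, ?_⟩, hconv, ?_⟩
  · have h1 : (a * vinf + b)⁻¹ ≤ b⁻¹ := inv_anti₀ hb (by nlinarith)
    have h2 : b⁻¹ = M / (N * σ2) := by
      rw [hb_def]
      field_simp
    linarith [h1, h2.le]
  · have : Tendsto (fun t => (a * v t + b)⁻¹) atTop (nhds ((a * vinf + b)⁻¹)) :=
      (((tendsto_const_nhds.mul hconv).add tendsto_const_nhds)).inv₀ hden.ne'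
    exact this.congr fun t => (hη t).symm
end

section
/- Any fixed point of the TSR state evolution satisfies a quadratic equation: if η > 0 and v ≥ 0 satisfy η = (((N−M)/M)·v + (N/M)·σ²)⁻¹ and v = (1/m(η) − η)⁻¹, where m(η) > 0 and 1/m(η) − η > 0, then σ²·m(η)·η² − (m(η) + σ²)·η + M/N = 0. (Underlying equation (34).) -/
/-- Underlying equation (34): any fixed point `(v, η)` of the TSR state evolution
satisfies the quadratic equation `σ²·m(η)·η² − (m(η) + σ²)·η + M/N = 0`. -/
theorem tsr_fixed_point_quadratic (M N σ2 : ℝ) (hM : 0 < M) (hMN : M < N) (hσ2 : 0 < σ2)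
    (m : ℝ → ℝ) (η v : ℝ) (hη : 0 < η) (hv : 0 ≤ v)
    (hmpos : 0 < m η) (hfpos : 0 < 1 / m η - η)
    (h1 : η = (((N - M) / M) * v + (N / M) * σ2)⁻¹)
    (h2 : v = (1 / m η - η)⁻¹) :
    σ2 * m η * η ^ 2 - (m η + σ2) * η + M / N = 0 := by
  have hM' : M ≠ 0 := ne_of_gt hM
  have hN : N ≠ 0 := ne_of_gt (hM.trans hMN)
  have hη' : η ≠ 0 := ne_of_gt hη
  have hm' : m η ≠ 0 := ne_of_gt hmpos
  have hf' : 1 / m η - η ≠ 0 := ne_of_gt hfpos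
  have hX : ((N - M) / M) * v + (N / M) * σ2 = η⁻¹ := by
    rw [h1, inv_inv]
  rw [h2] at hX
  have h1m : 1 - m η * η ≠ 0 := by
    have := mul_pos hmpos hfpos
    intro h
    rw [mul_sub, mul_one_div, div_self (ne_of_gt hmpos)] at this
    linarith
  field_simp [h1m] at hX ⊢
  nlinarith [hX]
end

section
/- Explicit form of the TSR state-evolution fixed point: if η > 0 and v ≥ 0 satisfy η = (((N−M)/M)·v + (N/M)·σ²)⁻¹ and v = (1/m(η) − η)⁻¹, where m(η) > 0 and 1/m(η) − η > 0, then, writing m = m(η), the discriminant (m + σ²)² − 4·σ²·m·(M/N) is nonnegative and η = [(m + σ²) − √((m + σ²)² − 4·σ²·m·(M/N))] / (2·σ²·m). (Equation (34).) -/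
/-- Equation (34), explicit form of the TSR state-evolution fixed point: writing
`m = m(η)`, the discriminant `(m + σ²)² − 4·σ²·m·(M/N)` is nonnegative and
`η = [(m + σ²) − √((m + σ²)² − 4·σ²·m·(M/N))] / (2·σ²·m)`. -/
theorem tsr_fixed_point_explicit (M N σ2 : ℝ) (hM : 0 < M) (hMN : M < N) (hσ2 : 0 < σ2)
    (m : ℝ → ℝ) (η v : ℝ) (hη : 0 < η) (hv : 0 ≤ v)
    (hmpos : 0 < m η) (hfpos : 0 < 1 / m η - η)
    (h1 : η = (((N - M) / M) * v + (N / M) * σ2)⁻¹)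
    (h2 : v = (1 / m η - η)⁻¹) :
    0 ≤ (m η + σ2) ^ 2 - 4 * σ2 * m η * (M / N) ∧
    η = ((m η + σ2) - Real.sqrt ((m η + σ2) ^ 2 - 4 * σ2 * m η * (M / N))) /
        (2 * σ2 * m η) := by
  set mm := m η with hmm
  have hN : 0 < N := lt_trans hM hMN
  have hmne : mm ≠ 0 := ne_of_gt hmpos
  have hηne : η ≠ 0 := ne_of_gt hη
  have h1mη : 0 < 1 - mm * η := by
    have h' : η < 1 / mm := by linarith
    have := (div_lt_div_iff₀ (by norm_num) hmpos).mp (by simpa [div_one] using h' : η / 1 < 1 / mm)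
    nlinarith
  -- from h2 : v * (1/mm - η) = 1
  have hv1 : v * (1 / mm - η) = 1 := by
    rw [h2, inv_mul_cancel₀ (ne_of_gt hfpos)]
  -- from h1 : take inverses
  have hX : ((N - M) / M) * v + (N / M) * σ2 = η⁻¹ := by
    have := congrArg Inv.inv h1
    rw [inv_inv] at this
    exact this.symm
  -- quadratic
  have hquad : σ2 * mm * η ^ 2 - (mm + σ2) * η + M / N = 0 := by
    have hMne : (M : ℝ) ≠ 0 := ne_of_gt hM
    have hNne : (N : ℝ) ≠ 0 := ne_of_gt hN
    field_simp at hX hv1 ⊢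
    linear_combination (-1 : ℝ) * ((1 - mm*η) * hX - (N-M) * η * hv1)
  -- η < 1/mm and σ2 * η ≤ M/N < 1
  have hmη : mm * η < 1 := by linarith
  have hση : σ2 * η < 1 := by
    -- η⁻¹ ≥ (N/M) σ2 > σ2
    have h1' : (N / M) * σ2 ≤ η⁻¹ := by
      have : 0 ≤ ((N - M) / M) * v :=
        mul_nonneg (div_nonneg (by linarith) hM.le) hv
      linarith [hX]
    have hgt : σ2 < η⁻¹ := lt_of_lt_of_le (by
      have : (1 : ℝ) < N / M := (one_lt_div hM).mpr hMN
      nlinarith) h1'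
    have := (mul_lt_mul_of_pos_right hgt hη)
    rwa [inv_mul_cancel₀ hηne] at this
  have hkey : 0 < mm + σ2 - 2 * σ2 * mm * η := by
    nlinarith [mul_pos hσ2 hmpos]
  have hdisc : (mm + σ2) ^ 2 - 4 * σ2 * mm * (M / N)
      = (mm + σ2 - 2 * σ2 * mm * η) ^ 2 := by
    nlinarith [hquad]
  constructor
  · rw [hdisc]; positivity
  · rw [hdisc, Real.sqrt_sq hkey.le]
    field_simp
    ring
end

section
/- Proposition 2 (TSR-DFT outperforms AMP-IID): for every t ≥ 0, v_T^t ≤ v_A^t. -/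
/-- Proposition 2 (TSR-DFT outperforms AMP-IID): for every `t ≥ 0`, `v_T^t ≤ v_A^t`. -/
theorem tsr_dft_outperforms_amp_iid (M N σ2 : ℝ) (hM : 0 < M) (hMN : M < N) (hσ2 : 0 < σ2)
    (m : ℝ → ℝ)
    (hmono : ∀ η₁ η₂ : ℝ, 0 < η₁ → η₁ ≤ η₂ → m η₂ ≤ m η₁)
    (hm : ∀ η > (0 : ℝ), 0 < m η ∧ m η ≤ 1 / (1 + η))
    (hf : ∀ η₁ η₂ : ℝ, 0 < η₁ → η₁ ≤ η₂ → 1 / m η₁ - η₁ ≤ 1 / m η₂ - η₂)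
    (vT ηT vA ηA : ℕ → ℝ)
    (hvT0 : vT 0 = (N - M) / N)
    (hηT : ∀ t : ℕ, ηT (t + 1) = ((N / M) * vT t + (N / M) * σ2)⁻¹)
    (hvT : ∀ t : ℕ, vT (t + 1) = ((N - M) / N) * (1 / m (ηT (t + 1)) - ηT (t + 1))⁻¹)
    (hvA0 : vA 0 = 1)
    (hηA : ∀ t : ℕ, ηA (t + 1) = ((N / M) * vA t + (N / M) * σ2)⁻¹)
    (hvA : ∀ t : ℕ, vA (t + 1) = m (ηA (t + 1))) :
    ∀ t : ℕ, vT t ≤ vA t := by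
  have hN : 0 < N := hM.trans hMN
  have hNM : 0 < N / M := div_pos hN hM
  -- positivity of vA
  have hvApos : ∀ t, 0 < vA t := by
    intro t
    induction t with
    | zero => rw [hvA0]; norm_num
    | succ t ih =>
      have hs : 0 < (N / M) * vA t + (N / M) * σ2 :=
        add_pos (mul_pos hNM ih) (mul_pos hNM hσ2)
      have hη : 0 < ηA (t + 1) := by rw [hηA]; exact inv_pos.mpr hs
      rw [hvA]; exact (hm _ hη).1
  have hηApos : ∀ t, 0 < ηA (t + 1) := by
    intro t
    rw [hηA]
    exact inv_pos.mpr (add_pos (mul_pos hNM (hvApos t)) (mul_pos hNM hσ2))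
  -- vA is nonincreasing
  have hvAmono : ∀ t, vA (t + 1) ≤ vA t := by
    intro t
    induction t with
    | zero =>
      have hη := hηApos 0
      have h2 := (hm _ hη).2
      have h3 : 1 / (1 + ηA (0 + 1)) ≤ 1 := by
        rw [div_le_one (by linarith)]
        linarith
      rw [hvA, hvA0]
      exact h2.trans h3
    | succ t ih =>
      have hsA : 0 < (N / M) * vA (t + 1) + (N / M) * σ2 :=
        add_pos (mul_pos hNM (hvApos (t + 1))) (mul_pos hNM hσ2)
      have hle : (N / M) * vA (t + 1) + (N / M) * σ2 ≤ (N / M) * vA t + (N / M) * σ2 := by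
        have := mul_le_mul_of_nonneg_left ih hNM.le
        linarith
      have hηle : ηA (t + 1) ≤ ηA (t + 2) := by
        rw [hηA t, hηA (t + 1)]
        exact inv_anti₀ hsA hle
      rw [hvA (t + 1), hvA t]
      exact hmono _ _ (hηApos t) hηle
  -- main invariant
  have key : ∀ t, 0 ≤ vT t ∧ vT t ≤ vA t := by
    intro t
    induction t with
    | zero =>
      constructor
      · rw [hvT0]; exact div_nonneg (by linarith) hN.le
      · rw [hvT0, hvA0, div_le_one hN]; linarith
    | succ t ih =>
      obtain ⟨h0, hle⟩ := ih
      have hsA : 0 < (N / M) * vA t + (N / M) * σ2 :=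
        add_pos (mul_pos hNM (hvApos t)) (mul_pos hNM hσ2)
      have hsT : 0 < (N / M) * vT t + (N / M) * σ2 := by
        have : 0 ≤ (N / M) * vT t := mul_nonneg hNM.le h0
        nlinarith [mul_pos hNM hσ2]
      have hsle : (N / M) * vT t + (N / M) * σ2 ≤ (N / M) * vA t + (N / M) * σ2 := by
        have := mul_le_mul_of_nonneg_left hle hNM.le
        linarith
      have hηA1 : 0 < ηA (t + 1) := hηApos t
      have hηle : ηA (t + 1) ≤ ηT (t + 1) := by
        rw [hηA, hηT]
        exact inv_anti₀ hsT hsle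
      have hηT1 : 0 < ηT (t + 1) := lt_of_lt_of_le hηA1 hηle
      have hmA : 0 < m (ηA (t + 1)) := (hm _ hηA1).1
      have hmT : 0 < m (ηT (t + 1)) := (hm _ hηT1).1
      -- g_A ≥ 1
      have hgA : 1 ≤ 1 / m (ηA (t + 1)) - ηA (t + 1) := by
        have h2 := (hm _ hηA1).2
        have h3 : 1 + ηA (t + 1) ≤ 1 / m (ηA (t + 1)) := by
          rw [le_div_iff₀ hmA]
          have h4 := (le_div_iff₀ (by linarith : (0:ℝ) < 1 + ηA (t + 1))).mp h2
          nlinarith [h4]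
        linarith
      have hgle : 1 / m (ηA (t + 1)) - ηA (t + 1) ≤ 1 / m (ηT (t + 1)) - ηT (t + 1) :=
        hf _ _ hηA1 hηle
      have hgT : 0 < 1 / m (ηT (t + 1)) - ηT (t + 1) := by linarith
      have hc : 0 ≤ (N - M) / N := div_nonneg (by linarith) hN.le
      constructor
      · rw [hvT]
        exact mul_nonneg hc (inv_nonneg.mpr hgT.le)
      · -- vT (t+1) ≤ vA (t+1) = m (ηA (t+1))
        rw [hvT, hvA]
        rw [mul_comm, ← div_eq_inv_mul, div_le_iff₀ hgT]
        -- goal: (N - M) / N ≤ m (ηA (t+1)) * (1/m(ηT) - ηT)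
        -- m_A * η_A ≤ M / N since m_A = vA (t+1) ≤ vA t and η_A = s_A⁻¹
        have hmAle : m (ηA (t + 1)) ≤ vA t := by rw [← hvA]; exact hvAmono t
        have hηAval : ηA (t + 1) * ((N / M) * vA t + (N / M) * σ2) = 1 := by
          rw [hηA]; exact inv_mul_cancel₀ hsA.ne'
        have hmη : m (ηA (t + 1)) * ηA (t + 1) ≤ M / N := by
          have h1 : m (ηA (t + 1)) * ηA (t + 1) ≤ (vA t + σ2) * ηA (t + 1) := by
            nlinarith [hσ2]
          have h2 : (vA t + σ2) * ηA (t + 1) = M / N := by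
            have hMN0 : (M : ℝ) / N ≠ 0 := ne_of_gt (div_pos hM hN)
            field_simp at hηAval ⊢
            nlinarith [hηAval]
          linarith
        have hmul : m (ηA (t + 1)) * (1 / m (ηA (t + 1)) - ηA (t + 1))
            = 1 - m (ηA (t + 1)) * ηA (t + 1) := by
          field_simp
        have hstep : m (ηA (t + 1)) * (1 / m (ηA (t + 1)) - ηA (t + 1))
            ≤ m (ηA (t + 1)) * (1 / m (ηT (t + 1)) - ηT (t + 1)) :=
          mul_le_mul_of_nonneg_left hgle hmA.le
        have hcval : (N - M) / N = 1 - M / N := by field_simp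
        rw [hcval]
        nlinarith [hmul, hstep, hmη]
  intro t
  exact (key t).2
end

section
/- For every t ≥ 0, the effective SNR of TSR-DFT dominates that of AMP-IID: η_T^{t+1} ≥ η_A^{t+1}. (Intermediate step in the proof of Corollary 1.) -/
/-- Intermediate step in the proof of Corollary 1: for every `t ≥ 0`, the effective SNR
of TSR-DFT dominates that of AMP-IID: `η_T^{t+1} ≥ η_A^{t+1}`. -/
theorem tsr_snr_dominates (M N σ2 : ℝ) (hM : 0 < M) (hMN : M < N) (hσ2 : 0 < σ2)
    (m : ℝ → ℝ)
    (hmono : ∀ η₁ η₂ : ℝ, 0 < η₁ → η₁ ≤ η₂ → m η₂ ≤ m η₁)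
    (hm : ∀ η > (0 : ℝ), 0 < m η ∧ m η ≤ 1 / (1 + η))
    (hf : ∀ η₁ η₂ : ℝ, 0 < η₁ → η₁ ≤ η₂ → 1 / m η₁ - η₁ ≤ 1 / m η₂ - η₂)
    (vT ηT vA ηA : ℕ → ℝ)
    (hvT0 : vT 0 = (N - M) / N)
    (hηT : ∀ t : ℕ, ηT (t + 1) = ((N / M) * vT t + (N / M) * σ2)⁻¹)
    (hvT : ∀ t : ℕ, vT (t + 1) = ((N - M) / N) * (1 / m (ηT (t + 1)) - ηT (t + 1))⁻¹)
    (hvA0 : vA 0 = 1)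
    (hηA : ∀ t : ℕ, ηA (t + 1) = ((N / M) * vA t + (N / M) * σ2)⁻¹)
    (hvA : ∀ t : ℕ, vA (t + 1) = m (ηA (t + 1))) :
    ∀ t : ℕ, ηA (t + 1) ≤ ηT (t + 1) := by
  have hN : (0:ℝ) < N := hM.trans hMN
  have hNM : (0:ℝ) < N / M := div_pos hN hM
  have hc : (0:ℝ) < (N - M) / N := div_pos (by linarith) hN
  -- g(η) := 1/m η - η ≥ 1 for η > 0
  have hg1 : ∀ η : ℝ, 0 < η → 1 ≤ 1 / m η - η := by
    intro η hη
    obtain ⟨hm0, hm1⟩ := hm η hη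
    have h1η : (0:ℝ) < 1 + η := by linarith
    have h2 : m η * (1 + η) ≤ 1 := (le_div_iff₀ h1η).1 hm1
    have h3 : 1 + η ≤ 1 / m η := (le_div_iff₀ hm0).2 (by linarith)
    linarith
  -- vA is positive and non-increasing
  have hApos : ∀ t : ℕ, 0 < vA t ∧ vA (t + 1) ≤ vA t := by
    intro t
    induction t with
    | zero =>
      have h0 : (0:ℝ) < vA 0 := by rw [hvA0]; norm_num
      have hηpos : 0 < ηA 1 := by
        rw [hηA 0]; exact inv_pos.2 (by positivity)
      obtain ⟨hm0, hm1⟩ := hm (ηA 1) hηpos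
      have : m (ηA 1) ≤ 1 := by
        have : 1 / (1 + ηA 1) ≤ 1 := by
          rw [div_le_one (by linarith)]; linarith
        linarith
      refine ⟨h0, ?_⟩
      rw [hvA 0, hvA0]; exact this
    | succ t ih =>
      obtain ⟨hpos, hmonoA⟩ := ih
      have hηpos : 0 < ηA (t + 1) := by
        rw [hηA t]; exact inv_pos.2 (by positivity)
      have hpos' : 0 < vA (t + 1) := by
        rw [hvA t]; exact (hm _ hηpos).1
      have hηpos2 : 0 < ηA (t + 2) := by
        rw [hηA (t + 1)]; exact inv_pos.2 (by positivity)
      -- ηA (t+1) ≤ ηA (t+2) since vA (t+1) ≤ vA t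
      have hηle : ηA (t + 1) ≤ ηA (t + 2) := by
        rw [hηA t, hηA (t + 1)]
        apply inv_anti₀ (by positivity)
        have := mul_le_mul_of_nonneg_left hmonoA hNM.le
        linarith
      refine ⟨hpos', ?_⟩
      rw [hvA (t + 1), hvA t]
      exact hmono _ _ hηpos hηle
  -- 0 < vT t and vT t ≤ vA t
  have hT : ∀ t : ℕ, 0 < vT t ∧ vT t ≤ vA t := by
    intro t
    induction t with
    | zero =>
      refine ⟨by rw [hvT0]; exact hc, ?_⟩
      rw [hvT0, hvA0]
      rw [div_le_one hN]; linarith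
    | succ t ih =>
      obtain ⟨hTpos, hTle⟩ := ih
      obtain ⟨hApos', hAmono⟩ := hApos t
      have hηApos : 0 < ηA (t + 1) := by
        rw [hηA t]; exact inv_pos.2 (by positivity)
      have hηTpos : 0 < ηT (t + 1) := by
        rw [hηT t]; exact inv_pos.2 (by positivity)
      -- ηA (t+1) ≤ ηT (t+1)
      have hηle : ηA (t + 1) ≤ ηT (t + 1) := by
        rw [hηA t, hηT t]
        apply inv_anti₀ (by positivity)
        have := mul_le_mul_of_nonneg_left hTle hNM.le
        linarith
      set gA := 1 / m (ηA (t + 1)) - ηA (t + 1) with hgA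
      set gT := 1 / m (ηT (t + 1)) - ηT (t + 1) with hgT
      have hgA1 : 1 ≤ gA := hg1 _ hηApos
      have hgT1 : 1 ≤ gT := hg1 _ hηTpos
      have hgle : gA ≤ gT := hf _ _ hηApos hηle
      have hTval : vT (t + 1) = ((N - M) / N) * gT⁻¹ := hvT t
      have hTpos' : 0 < vT (t + 1) := by
        rw [hTval]; positivity
      refine ⟨hTpos', ?_⟩
      obtain ⟨hmA0, hmA1⟩ := hm (ηA (t + 1)) hηApos
      -- key: ηA(t+1) * m(ηA(t+1)) ≤ M / N
      have hkey : ηA (t + 1) * m (ηA (t + 1)) ≤ M / N := by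
        have hmle : m (ηA (t + 1)) ≤ vA t := by
          have := hAmono; rw [hvA t] at this; exact this
        have hηAub : ηA (t + 1) ≤ ((N / M) * vA t)⁻¹ := by
          rw [hηA t]
          apply inv_anti₀ (by positivity)
          nlinarith
        have h1 : ηA (t + 1) * m (ηA (t + 1)) ≤ ((N / M) * vA t)⁻¹ * vA t := by
          apply mul_le_mul hηAub hmle hmA0.le
          positivity
        have h2 : ((N / M) * vA t)⁻¹ * vA t = M / N := by
          rw [mul_inv]
          field_simp
        linarith [h1, h2.le]
      -- m(ηA) * gA = 1 - ηA * m(ηA) ≥ (N-M)/N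
      have hmul : m (ηA (t + 1)) * gA = 1 - ηA (t + 1) * m (ηA (t + 1)) := by
        rw [hgA]
        field_simp
      have hclow : (N - M) / N ≤ m (ηA (t + 1)) * gA := by
        rw [hmul]
        have : (N - M) / N = 1 - M / N := by field_simp
        rw [this]; linarith
      -- conclude vT (t+1) ≤ m (ηA (t+1)) = vA (t+1)
      have hgApos : 0 < gA := lt_of_lt_of_le one_pos hgA1
      have hgTpos : 0 < gT := lt_of_lt_of_le one_pos hgT1
      have step1 : vT (t + 1) ≤ ((N - M) / N) * gA⁻¹ := by
        rw [hTval]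
        exact mul_le_mul_of_nonneg_left (inv_anti₀ hgApos hgle) hc.le
      have step2 : ((N - M) / N) * gA⁻¹ ≤ m (ηA (t + 1)) := by
        rw [mul_inv_le_iff₀ hgApos]
        linarith [hclow, mul_comm gA (m (ηA (t + 1)))]
      rw [hvA t]
      linarith
  -- final conclusion
  intro t
  obtain ⟨hTpos, hTle⟩ := hT t
  have hApos' := (hApos t).1
  rw [hηA t, hηT t]
  apply inv_anti₀ (by positivity)
  have := mul_le_mul_of_nonneg_left hTle hNM.le
  linarith
end

section
/- Corollary 1: for every t ≥ 0, the per-iteration estimation MSE of TSR-DFT is no larger than that of AMP-IID, i.e., m(η_T^{t+1}) ≤ m(η_A^{t+1}). -/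
/-- Corollary 1: for every `t ≥ 0`, the per-iteration estimation MSE of TSR-DFT is no
larger than that of AMP-IID: `m(η_T^{t+1}) ≤ m(η_A^{t+1})`. -/
theorem tsr_mse_dominates (M N σ2 : ℝ) (hM : 0 < M) (hMN : M < N) (hσ2 : 0 < σ2)
    (m : ℝ → ℝ)
    (hmono : ∀ η₁ η₂ : ℝ, 0 < η₁ → η₁ ≤ η₂ → m η₂ ≤ m η₁)
    (hm : ∀ η > (0 : ℝ), 0 < m η ∧ m η ≤ 1 / (1 + η))
    (hf : ∀ η₁ η₂ : ℝ, 0 < η₁ → η₁ ≤ η₂ → 1 / m η₁ - η₁ ≤ 1 / m η₂ - η₂)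
    (vT ηT vA ηA : ℕ → ℝ)
    (hvT0 : vT 0 = (N - M) / N)
    (hηT : ∀ t : ℕ, ηT (t + 1) = ((N / M) * vT t + (N / M) * σ2)⁻¹)
    (hvT : ∀ t : ℕ, vT (t + 1) = ((N - M) / N) * (1 / m (ηT (t + 1)) - ηT (t + 1))⁻¹)
    (hvA0 : vA 0 = 1)
    (hηA : ∀ t : ℕ, ηA (t + 1) = ((N / M) * vA t + (N / M) * σ2)⁻¹)
    (hvA : ∀ t : ℕ, vA (t + 1) = m (ηA (t + 1))) :
    ∀ t : ℕ, m (ηT (t + 1)) ≤ m (ηA (t + 1)) := by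
  have hN : (0:ℝ) < N := hM.trans hMN
  have hNM : (0:ℝ) < N / M := div_pos hN hM
  -- positivity of ηA (t+1) when vA t > 0
  have hηApos : ∀ t : ℕ, 0 < vA t → 0 < ηA (t + 1) := by
    intro t hv
    rw [hηA t]
    positivity
  -- vA is positive and non-increasing
  have hvAkey : ∀ t : ℕ, 0 < vA t ∧ vA (t + 1) ≤ vA t := by
    intro t
    induction t with
    | zero =>
      have h0 : (0:ℝ) < vA 0 := by rw [hvA0]; norm_num
      have hη1 : 0 < ηA 1 := hηApos 0 h0
      refine ⟨h0, ?_⟩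
      have := (hm (ηA 1) hη1).2
      have h1 : (1:ℝ) / (1 + ηA 1) ≤ 1 := by
        rw [div_le_one (by linarith)]; linarith
      rw [hvA 0, hvA0]; linarith
    | succ t ih =>
      obtain ⟨hpos, hle⟩ := ih
      have hη1 : 0 < ηA (t + 1) := hηApos t hpos
      have hpos1 : 0 < vA (t + 1) := by
        rw [hvA t]; exact (hm _ hη1).1
      refine ⟨hpos1, ?_⟩
      have hη2 : 0 < ηA (t + 2) := hηApos (t + 1) hpos1
      have hηle : ηA (t + 1) ≤ ηA (t + 2) := by
        rw [hηA t, hηA (t + 1)]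
        apply inv_anti₀
        · positivity
        · nlinarith
      have := hmono (ηA (t + 1)) (ηA (t + 2)) hη1 hηle
      rw [hvA t, hvA (t + 1)]; exact this
  -- main invariant: 0 < vT t ≤ vA t
  have hmain : ∀ t : ℕ, 0 < vT t ∧ vT t ≤ vA t := by
    intro t
    induction t with
    | zero =>
      constructor
      · rw [hvT0]; exact div_pos (by linarith) hN
      · rw [hvT0, hvA0]
        rw [div_le_one hN]; linarith
    | succ t ih =>
      obtain ⟨hTpos, hTle⟩ := ih
      have hvAt : 0 < vA t := (hvAkey t).1
      have hηa : 0 < ηA (t + 1) := hηApos t hvAt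
      have hηt : 0 < ηT (t + 1) := by
        rw [hηT t]; positivity
      have hηle : ηA (t + 1) ≤ ηT (t + 1) := by
        rw [hηA t, hηT t]
        apply inv_anti₀
        · positivity
        · nlinarith
      obtain ⟨hmT, hmT2⟩ := hm (ηT (t + 1)) hηt
      obtain ⟨hmA, hmA2⟩ := hm (ηA (t + 1)) hηa
      -- D_T ≥ 1 and D_A ≥ 1
      have hDT : (1:ℝ) ≤ 1 / m (ηT (t + 1)) - ηT (t + 1) := by
        have hp : (0:ℝ) < 1 + ηT (t + 1) := by linarith
        have h1 : 1 + ηT (t + 1) ≤ 1 / m (ηT (t + 1)) := by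
          rw [le_div_iff₀ hmT]
          calc (1 + ηT (t + 1)) * m (ηT (t + 1))
              ≤ (1 + ηT (t + 1)) * (1 / (1 + ηT (t + 1))) :=
                mul_le_mul_of_nonneg_left hmT2 hp.le
            _ = 1 := by field_simp
        linarith
      have hDA : (1:ℝ) ≤ 1 / m (ηA (t + 1)) - ηA (t + 1) := by
        have hp : (0:ℝ) < 1 + ηA (t + 1) := by linarith
        have h1 : 1 + ηA (t + 1) ≤ 1 / m (ηA (t + 1)) := by
          rw [le_div_iff₀ hmA]
          calc (1 + ηA (t + 1)) * m (ηA (t + 1))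
              ≤ (1 + ηA (t + 1)) * (1 / (1 + ηA (t + 1))) :=
                mul_le_mul_of_nonneg_left hmA2 hp.le
            _ = 1 := by field_simp
        linarith
      have hfAT := hf (ηA (t + 1)) (ηT (t + 1)) hηa hηle
      have hDTpos : (0:ℝ) < 1 / m (ηT (t + 1)) - ηT (t + 1) := by linarith
      have hDApos : (0:ℝ) < 1 / m (ηA (t + 1)) - ηA (t + 1) := by linarith
      constructor
      · rw [hvT t]
        exact mul_pos (div_pos (by linarith) hN) (inv_pos.mpr hDTpos)
      · -- key: ηA(t+1) * m(ηA(t+1)) ≤ M / N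
        have hvA1le : vA (t + 1) ≤ vA t := (hvAkey t).2
        have hmAle : m (ηA (t + 1)) ≤ vA t := by rw [← hvA t]; exact hvA1le
        have hkey : ηA (t + 1) * m (ηA (t + 1)) ≤ M / N := by
          have hx : (0:ℝ) < (N / M) * vA t + (N / M) * σ2 := by positivity
          have hηval : ηA (t + 1) = ((N / M) * vA t + (N / M) * σ2)⁻¹ := hηA t
          have h1 : ηA (t + 1) * m (ηA (t + 1)) ≤ ηA (t + 1) * vA t :=
            mul_le_mul_of_nonneg_left hmAle (le_of_lt hηa)
          have h2 : ηA (t + 1) * vA t ≤ M / N := by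
            rw [hηval, inv_mul_le_iff₀ hx]
            have he : ((N / M) * vA t + (N / M) * σ2) * (M / N) = vA t + σ2 := by
              field_simp
            rw [he]; linarith
          linarith
        -- c / D_T ≤ c / D_A ≤ m (ηA (t+1))
        rw [hvT t, hvA t]
        have hc : (0:ℝ) < (N - M) / N := div_pos (by linarith) hN
        have step1 : ((N - M) / N) * (1 / m (ηT (t + 1)) - ηT (t + 1))⁻¹ ≤
            ((N - M) / N) * (1 / m (ηA (t + 1)) - ηA (t + 1))⁻¹ := by
          apply mul_le_mul_of_nonneg_left _ (le_of_lt hc)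
          exact inv_anti₀ hDApos hfAT
        have step2 : ((N - M) / N) * (1 / m (ηA (t + 1)) - ηA (t + 1))⁻¹ ≤ m (ηA (t + 1)) := by
          rw [mul_inv_le_iff₀' hDApos]
          have hexp : (1 / m (ηA (t + 1)) - ηA (t + 1)) * m (ηA (t + 1)) =
              1 - ηA (t + 1) * m (ηA (t + 1)) := by
            rw [sub_mul, one_div, inv_mul_cancel₀ (ne_of_gt hmA)]
          rw [hexp]
          have hcN : (N - M) / N = 1 - M / N := by field_simp
          rw [hcN]
          linarith
        linarith
  -- conclude
  intro t
  obtain ⟨hTpos, hTle⟩ := hmain t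
  have hvAt : 0 < vA t := (hvAkey t).1
  have hηa : 0 < ηA (t + 1) := hηApos t hvAt
  have hηle : ηA (t + 1) ≤ ηT (t + 1) := by
    rw [hηA t, hηT t]
    apply inv_anti₀
    · positivity
    · nlinarith
  exact hmono (ηA (t + 1)) (ηT (t + 1)) hηa hηle
end

section
/- Key induction step of Proposition 2 (equations (35)–(39)): let v, v' be real numbers with 0 < v' ≤ v, set η = ((N/M)·v + (N/M)·σ²)⁻¹, and suppose ((N−M)/(N·v') + η)⁻¹ = m(η), where m(η) > 0. Then v' + σ²·v' / ((N/M)·v' + ((N−M)/M)·σ²) ≤ m(η), and consequently v' ≤ m(η). -/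
/-- Key induction step of Proposition 2 (equations (35)–(39)): if `0 < v' ≤ v`,
`η = ((N/M)·v + (N/M)·σ²)⁻¹` and `((N−M)/(N·v') + η)⁻¹ = m(η)` with `m(η) > 0`, then
`v' + σ²·v' / ((N/M)·v' + ((N−M)/M)·σ²) ≤ m(η)`, and consequently `v' ≤ m(η)`. -/
theorem tsr_induction_step (M N σ2 : ℝ) (hM : 0 < M) (hMN : M < N) (hσ2 : 0 < σ2)
    (m : ℝ → ℝ) (v v' η : ℝ) (hv' : 0 < v') (hv'v : v' ≤ v)
    (hη : η = ((N / M) * v + (N / M) * σ2)⁻¹)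
    (hrec : ((N - M) / (N * v') + η)⁻¹ = m η) (hmpos : 0 < m η) :
    v' + σ2 * v' / ((N / M) * v' + ((N - M) / M) * σ2) ≤ m η ∧ v' ≤ m η := by
  have hN : 0 < N := lt_trans hM hMN
  have hNM : 0 < N - M := sub_pos.mpr hMN
  have hNMdiv : 0 < N / M := div_pos hN hM
  have hv : 0 < v := lt_of_lt_of_le hv' hv'v
  have hd : 0 < (N / M) * v' + (N / M) * σ2 := by positivity
  have hd' : 0 < (N / M) * v + (N / M) * σ2 := by positivity
  have hηpos : 0 < η := by rw [hη]; positivity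
  set η' : ℝ := ((N / M) * v' + (N / M) * σ2)⁻¹ with hη'
  have hη'pos : 0 < η' := by rw [hη']; positivity
  have hηle : η ≤ η' := by
    rw [hη, hη']
    apply inv_anti₀ hd
    have : (N / M) * v' ≤ (N / M) * v := by
      exact mul_le_mul_of_nonneg_left hv'v (le_of_lt hNMdiv)
    linarith
  have hApos : 0 < (N - M) / (N * v') := by positivity
  have hsum : 0 < (N - M) / (N * v') + η := by linarith
  have hmono : ((N - M) / (N * v') + η')⁻¹ ≤ ((N - M) / (N * v') + η)⁻¹ := by
    apply inv_anti₀ hsum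
    linarith
  have heq : v' + σ2 * v' / ((N / M) * v' + ((N - M) / M) * σ2)
      = ((N - M) / (N * v') + η')⁻¹ := by
    rw [hη']
    have h1 : (N / M) * v' + ((N - M) / M) * σ2 > 0 := by positivity
    field_simp
    ring
  have h1 : v' + σ2 * v' / ((N / M) * v' + ((N - M) / M) * σ2) ≤ m η := by
    rw [heq, ← hrec]; exact hmono
  refine ⟨h1, ?_⟩
  have hextra : 0 ≤ σ2 * v' / ((N / M) * v' + ((N - M) / M) * σ2) := by positivity
  linarith
end

section
/- If m is additionally continuous on (0, ∞), then the limits v^∞ = lim_{t→∞} v^t and η^∞ = lim_{t→∞} η^{t+1} of the TSR state-evolution sequences exist and satisfy the fixed-point equations η^∞ = (((N−M)/M)·v^∞ + (N/M)·σ²)⁻¹ and v^∞ = (1/m(η^∞) − η^∞)⁻¹, the latter provided 1/m(η^∞) − η^∞ > 0. -/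
open Filter

/-- If `m` is additionally continuous on `(0, ∞)`, the limits
`v^∞ = lim v^t` and `η^∞ = lim η^{t+1}` of the TSR state-evolution sequences exist
and satisfy the fixed-point equations `η^∞ = (((N−M)/M)·v^∞ + (N/M)·σ²)⁻¹` and,
provided `1/m(η^∞) − η^∞ > 0`, also `v^∞ = (1/m(η^∞) − η^∞)⁻¹`. -/
theorem tsr_se_limit_fixed_point (M N σ2 : ℝ) (hM : 0 < M) (hMN : M < N) (hσ2 : 0 < σ2)
    (m : ℝ → ℝ)
    (hm : ∀ η > (0 : ℝ), 0 < m η ∧ m η ≤ 1 / (1 + η))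
    (hf : ∀ η₁ η₂ : ℝ, 0 < η₁ → η₁ ≤ η₂ → 1 / m η₁ - η₁ ≤ 1 / m η₂ - η₂)
    (hcont : ContinuousOn m (Set.Ioi 0))
    (v η : ℕ → ℝ) (hv0 : v 0 = 1)
    (hη : ∀ t : ℕ, η (t + 1) = (((N - M) / M) * v t + (N / M) * σ2)⁻¹)
    (hv : ∀ t : ℕ, v (t + 1) = (1 / m (η (t + 1)) - η (t + 1))⁻¹) :
    ∃ vinf ηinf : ℝ,
      Tendsto v atTop (nhds vinf) ∧
      Tendsto (fun t : ℕ => η (t + 1)) atTop (nhds ηinf) ∧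
      ηinf = (((N - M) / M) * vinf + (N / M) * σ2)⁻¹ ∧
      (0 < 1 / m ηinf - ηinf → vinf = (1 / m ηinf - ηinf)⁻¹) := by
  have hNM : 0 < (N - M) / M := div_pos (by linarith) hM
  have hb : 0 < N / M * σ2 := mul_pos (div_pos (by linarith) hM) hσ2
  have hkey : ∀ x : ℝ, 0 < x → 1 ≤ 1 / m x - x := by
    intro x hx
    obtain ⟨h1, h2⟩ := hm x hx
    have h3 : 1 + x ≤ 1 / m x := by
      have := one_div_le_one_div_of_le h1 h2
      rwa [one_div_one_div] at this
    linarith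
  have hvb : ∀ t, 0 < v t ∧ v t ≤ 1 := by
    intro t
    induction t with
    | zero => simp [hv0]
    | succ n ih =>
      have hd : 0 < (N - M) / M * v n + N / M * σ2 := by
        have := mul_pos hNM ih.1; linarith
      have hη1 : 0 < η (n + 1) := by rw [hη n]; exact inv_pos.mpr hd
      have hk := hkey _ hη1
      rw [hv n]
      refine ⟨inv_pos.mpr (by linarith), ?_⟩
      have := one_div_le_one_div_of_le (by linarith : (0:ℝ) < 1) hk
      simpa [one_div] using this
  have hηpos : ∀ t, 0 < η (t + 1) := by
    intro t
    rw [hη t]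
    have := mul_pos hNM (hvb t).1
    exact inv_pos.mpr (by linarith)
  have hmono : ∀ t, v (t + 1) ≤ v t := by
    intro t
    induction t with
    | zero =>
      rw [hv0, hv 0]
      have hk := hkey _ (hηpos 0)
      have := one_div_le_one_div_of_le (by linarith : (0:ℝ) < 1) hk
      simpa [one_div] using this
    | succ n ih =>
      have h1 : η (n + 1) ≤ η (n + 1 + 1) := by
        rw [hη n, hη (n + 1)]
        have hpos : 0 < (N - M) / M * v (n + 1) + N / M * σ2 := by
          have := mul_pos hNM (hvb (n + 1)).1; linarith
        have hle : (N - M) / M * v (n + 1) + N / M * σ2 ≤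
            (N - M) / M * v n + N / M * σ2 := by
          have := mul_le_mul_of_nonneg_left ih hNM.le; linarith
        have := one_div_le_one_div_of_le hpos hle
        simpa [one_div] using this
      have h2 := hf _ _ (hηpos n) h1
      rw [hv (n + 1), hv n]
      have hk := hkey _ (hηpos n)
      have := one_div_le_one_div_of_le (by linarith : (0:ℝ) < 1 / m (η (n+1)) - η (n+1)) h2
      simpa [one_div] using this
  have hanti : Antitone v := antitone_nat_of_succ_le hmono
  have hbdd : BddBelow (Set.range v) := ⟨0, by rintro x ⟨t, rfl⟩; exact (hvb t).1.le⟩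
  have hvlim : Tendsto v atTop (nhds (⨅ t, v t)) := tendsto_atTop_ciInf hanti hbdd
  set vinf := ⨅ t, v t with hvinf_def
  have hvinf0 : 0 ≤ vinf := le_ciInf fun t => (hvb t).1.le
  have hd : 0 < (N - M) / M * vinf + N / M * σ2 := by
    have := mul_nonneg hNM.le hvinf0; linarith
  refine ⟨vinf, ((N - M) / M * vinf + N / M * σ2)⁻¹, hvlim, ?_, rfl, ?_⟩
  · have h1 : Tendsto (fun t => (N - M) / M * v t + N / M * σ2) atTop
        (nhds ((N - M) / M * vinf + N / M * σ2)) :=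
      (hvlim.const_mul _).add_const _
    exact (h1.inv₀ hd.ne').congr fun t => (hη t).symm
  · intro hLpos
    set ηinf := ((N - M) / M * vinf + N / M * σ2)⁻¹ with hηinf_def
    have hηinf : 0 < ηinf := inv_pos.mpr hd
    have hηlim : Tendsto (fun t => η (t + 1)) atTop (nhds ηinf) := by
      have h1 : Tendsto (fun t => (N - M) / M * v t + N / M * σ2) atTop
          (nhds ((N - M) / M * vinf + N / M * σ2)) :=
        (hvlim.const_mul _).add_const _
      exact (h1.inv₀ hd.ne').congr fun t => (hη t).symm
    have hmc : Tendsto (fun t => m (η (t + 1))) atTop (nhds (m ηinf)) := by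
      have h2 : Tendsto (fun t => η (t + 1)) atTop (nhdsWithin ηinf (Set.Ioi 0)) := by
        rw [tendsto_nhdsWithin_iff]
        exact ⟨hηlim, Eventually.of_forall fun t => hηpos t⟩
      exact ((hcont ηinf hηinf).tendsto).comp h2
    have hm0 : 0 < m ηinf := (hm ηinf hηinf).1
    have hftend : Tendsto (fun t => 1 / m (η (t + 1)) - η (t + 1)) atTop
        (nhds (1 / m ηinf - ηinf)) := by
      have h3 : Tendsto (fun t => 1 / m (η (t + 1))) atTop (nhds (1 / m ηinf)) := by
        simpa [one_div] using hmc.inv₀ hm0.ne'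
      exact h3.sub hηlim
    have hvtend2 : Tendsto (fun t => v (t + 1)) atTop (nhds ((1 / m ηinf - ηinf)⁻¹)) :=
      (hftend.inv₀ hLpos.ne').congr fun t => (hv t).symm
    have hvtend1 : Tendsto (fun t => v (t + 1)) atTop (nhds vinf) :=
      hvlim.comp (tendsto_add_atTop_nat 1)
    exact tendsto_nhds_unique hvtend1 hvtend2
end

section
/- Stationary performance of TSR-DFT: if m is additionally continuous on (0, ∞) and 1/m(η) − η > 0 for all η > 0, then the limit η^∞ = lim_{t→∞} η^{t+1} of the TSR state-evolution SNR sequence exists, lies in (0, M/(N·σ²)], and satisfies σ²·m(η^∞)·(η^∞)² − (m(η^∞) + σ²)·η^∞ + M/N = 0, i.e., the fixed-point equation (34) characterizing the replica-predicted optimal MMSE performance. -/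
open Filter

/-- Stationary performance of TSR-DFT: if `m` is additionally continuous on `(0, ∞)`
and `1/m(η) − η > 0` for all `η > 0`, then the limit `η^∞` of the TSR state-evolution
SNR sequence exists, lies in `(0, M/(N·σ²)]`, and satisfies the fixed-point equation
`σ²·m(η^∞)·(η^∞)² − (m(η^∞) + σ²)·η^∞ + M/N = 0` (equation (34)). -/
theorem tsr_stationary_performance (M N σ2 : ℝ) (hM : 0 < M) (hMN : M < N) (hσ2 : 0 < σ2)
    (m : ℝ → ℝ)
    (hm : ∀ η > (0 : ℝ), 0 < m η ∧ m η ≤ 1 / (1 + η))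
    (hf : ∀ η₁ η₂ : ℝ, 0 < η₁ → η₁ ≤ η₂ → 1 / m η₁ - η₁ ≤ 1 / m η₂ - η₂)
    (hcont : ContinuousOn m (Set.Ioi 0))
    (hfpos : ∀ η > (0 : ℝ), 0 < 1 / m η - η)
    (v η : ℕ → ℝ) (hv0 : v 0 = 1)
    (hη : ∀ t : ℕ, η (t + 1) = (((N - M) / M) * v t + (N / M) * σ2)⁻¹)
    (hv : ∀ t : ℕ, v (t + 1) = (1 / m (η (t + 1)) - η (t + 1))⁻¹) :
    ∃ ηinf : ℝ, ηinf ∈ Set.Ioc (0 : ℝ) (M / (N * σ2)) ∧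
      Tendsto (fun t : ℕ => η (t + 1)) atTop (nhds ηinf) ∧
      σ2 * m ηinf * ηinf ^ 2 - (m ηinf + σ2) * ηinf + M / N = 0 := by
  have hc1 : (0:ℝ) ≤ (N - M) / M := div_nonneg (by linarith) hM.le
  have hc2 : (0:ℝ) < (N / M) * σ2 := mul_pos (div_pos (by linarith) hM) hσ2
  -- positivity of v
  have hvpos : ∀ t, 0 < v t := by
    intro t
    induction t with
    | zero => rw [hv0]; norm_num
    | succ t ih =>
      have hηp : 0 < η (t + 1) := by
        rw [hη t]
        exact inv_pos.mpr (by nlinarith [mul_nonneg hc1 ih.le])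
      rw [hv t]
      exact inv_pos.mpr (hfpos _ hηp)
  have hηpos : ∀ t, 0 < η (t + 1) := by
    intro t
    rw [hη t]
    exact inv_pos.mpr (by nlinarith [mul_nonneg hc1 (hvpos t).le])
  -- v ≤ 1
  have hψle1 : ∀ x > (0:ℝ), (1 / m x - x)⁻¹ ≤ 1 := by
    intro x hx
    have h1 := (hm x hx).1
    have h2 := (hm x hx).2
    have : (1:ℝ) ≤ 1 / m x - x := by
      have : 1 / m x ≥ 1 + x := by
        rw [ge_iff_le, le_div_iff₀ h1]
        calc (1 + x) * m x ≤ (1 + x) * (1 / (1 + x)) := by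
              apply mul_le_mul_of_nonneg_left h2 (by linarith)
          _ = 1 := by field_simp
      linarith
    calc (1 / m x - x)⁻¹ ≤ 1⁻¹ := by
          apply inv_anti₀ (by norm_num) this
      _ = 1 := by norm_num
  have hvle1 : ∀ t, v t ≤ 1 := by
    intro t
    cases t with
    | zero => rw [hv0]
    | succ t => rw [hv t]; exact hψle1 _ (hηpos t)
  -- v nonincreasing
  have hvmono : ∀ t, v (t + 1) ≤ v t := by
    intro t
    induction t with
    | zero => rw [hv0]; exact hvle1 1
    | succ t ih =>
      -- η (t+2) ≥ η (t+1)
      have hηup : η (t + 1) ≤ η (t + 2) := by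
        rw [hη t, hη (t + 1)]
        apply inv_anti₀ (by nlinarith [mul_nonneg hc1 (hvpos (t+1)).le])
        have := mul_le_mul_of_nonneg_left ih hc1
        linarith
      rw [hv t, hv (t + 1)]
      apply inv_anti₀ (hfpos _ (hηpos t))
      exact hf _ _ (hηpos t) hηup
  -- η nondecreasing
  have hηmono : Monotone (fun t : ℕ => η (t + 1)) := by
    apply monotone_nat_of_le_succ
    intro t
    rw [hη t, hη (t + 1)]
    apply inv_anti₀ (by nlinarith [mul_nonneg hc1 (hvpos (t+1)).le])
    have := mul_le_mul_of_nonneg_left (hvmono t) hc1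
    linarith
  -- upper bound
  have hub : ∀ t, η (t + 1) ≤ M / (N * σ2) := by
    intro t
    rw [hη t]
    have h1 : (N / M) * σ2 ≤ (N - M) / M * v t + (N / M) * σ2 := by
      nlinarith [mul_nonneg hc1 (hvpos t).le]
    calc (((N - M) / M) * v t + (N / M) * σ2)⁻¹ ≤ ((N / M) * σ2)⁻¹ :=
          inv_anti₀ hc2 h1
      _ = M / (N * σ2) := by field_simp
  have hbdd : BddAbove (Set.range fun t : ℕ => η (t + 1)) :=
    ⟨M / (N * σ2), by rintro x ⟨t, rfl⟩; exact hub t⟩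
  set L := ⨆ t : ℕ, η (t + 1) with hL
  have htend : Tendsto (fun t : ℕ => η (t + 1)) atTop (nhds L) :=
    tendsto_atTop_ciSup hηmono hbdd
  have hL1 : η 1 ≤ L := le_ciSup hbdd 0
  have hLpos : 0 < L := lt_of_lt_of_le (hηpos 0) hL1
  have hLub : L ≤ M / (N * σ2) := ciSup_le hub
  have hmL := hm L hLpos
  have hmLpos : 0 < m L := hmL.1
  have hDpos : 0 < 1 / m L - L := hfpos L hLpos
  -- continuity: m (η (t+1)) → m L
  have hmtend : Tendsto (fun t : ℕ => m (η (t + 1))) atTop (nhds (m L)) := by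
    have h1 : Tendsto (fun t : ℕ => η (t + 1)) atTop (nhdsWithin L (Set.Ioi 0)) :=
      tendsto_nhdsWithin_of_tendsto_nhds_of_eventually_within _ htend
        (Eventually.of_forall fun t => hηpos t)
    exact (hcont L hLpos).tendsto.comp h1
  have hDtend : Tendsto (fun t : ℕ => 1 / m (η (t + 1)) - η (t + 1)) atTop
      (nhds (1 / m L - L)) := by
    exact ((tendsto_const_nhds.div hmtend hmLpos.ne').sub htend)
  have hvtend : Tendsto (fun t : ℕ => v (t + 1)) atTop (nhds ((1 / m L - L)⁻¹)) := by
    have := hDtend.inv₀ hDpos.ne'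
    simpa [hv] using this
  set V := (1 / m L - L)⁻¹ with hV
  have hVpos : 0 < V := inv_pos.mpr hDpos
  have hden : (0:ℝ) < (N - M) / M * V + (N / M) * σ2 := by
    nlinarith [mul_nonneg hc1 hVpos.le]
  have hηtend2 : Tendsto (fun t : ℕ => η (t + 2)) atTop
      (nhds (((N - M) / M * V + (N / M) * σ2)⁻¹)) := by
    have h1 : Tendsto (fun t : ℕ => (N - M) / M * v (t + 1) + (N / M) * σ2) atTop
        (nhds ((N - M) / M * V + (N / M) * σ2)) :=
      (tendsto_const_nhds.mul hvtend).add tendsto_const_nhds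
    have := h1.inv₀ hden.ne'
    simpa [hη] using this
  have hηtend2' : Tendsto (fun t : ℕ => η (t + 2)) atTop (nhds L) := by
    have := htend.comp (tendsto_add_atTop_nat 1)
    exact this
  have hfix : L = ((N - M) / M * V + (N / M) * σ2)⁻¹ :=
    tendsto_nhds_unique hηtend2' hηtend2
  refine ⟨L, ⟨hLpos, hLub⟩, htend, ?_⟩
  have hM' : M ≠ 0 := hM.ne'
  have hN' : N ≠ 0 := by intro h; rw [h] at hMN; linarith
  have hfix' : L * ((N - M) / M * V + (N / M) * σ2) = 1 := by
    rw [hfix]; exact inv_mul_cancel₀ hden.ne'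
  have hVeq : V * (1 / m L - L) = 1 := by
    rw [hV]; exact inv_mul_cancel₀ hDpos.ne'
  have hmL' : m L ≠ 0 := hmLpos.ne'
  field_simp at hVeq hfix'
  have key : M = N * (m L * L) + N * (σ2 * L) - N * (σ2 * m L * L ^ 2) := by
    linear_combination L * (N - M) * hVeq - (1 - m L * L) * hfix'
  field_simp
  linarith [key]
end
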